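/- arXiv:2404.07885 — 5 statements merged into one kernel-verified Lean document; each statement's English description precedes it below -/
import Mathlib

section
/- If N is a quotient of a matroid M on the same ground set E, then every handle of N is a handle of M. -/
open Classical

/-- A matroid on a finite ground set `E`, presented by its nonempty collection of bases,
which satisfies the basis exchange axiom. -/
structure FinMatroid (α : Type*) [DecidableEq α] where
  E : Finset α
  bases : Finset (Finset α)
  bases_nonempty : bases.Nonempty
  subset_ground : ∀ B ∈ bases, B ⊆ E
  exchange : ∀ B ∈ bases, ∀ B' ∈ bases, ∀ e ∈ B \ B',
      ∃ f ∈ B' \ B, insert f (B.erase e) ∈ bases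

variable {α : Type*} [DecidableEq α]

/-- Independence with respect to a collection `𝓑` of bases: being contained in a basis. -/
def Indep (𝓑 : Finset (Finset α)) (I : Finset α) : Prop := ∃ B ∈ 𝓑, I ⊆ B

/-- The rank of a collection of bases: the (common) cardinality of the bases. -/
def dataRank (𝓑 : Finset (Finset α)) : ℕ := 𝓑.sup Finset.card

/-- The rank of a subset `A`: the maximal size of its intersection with a basis. -/
def dataRankOf (𝓑 : Finset (Finset α)) (A : Finset α) : ℕ := 𝓑.sup fun B => (B ∩ A).card

/-- Circuits: the minimal dependent subsets of the ground set. -/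
def IsCircuit (E : Finset α) (𝓑 : Finset (Finset α)) (C : Finset α) : Prop :=
  C ⊆ E ∧ ¬ Indep 𝓑 C ∧ ∀ D ⊂ C, Indep 𝓑 D

/-- A loop: an element lying in no basis. -/
def IsLoop (𝓑 : Finset (Finset α)) (e : α) : Prop := ∀ B ∈ 𝓑, e ∉ B

/-- A coloop: an element lying in every basis. -/
def IsColoop (𝓑 : Finset (Finset α)) (e : α) : Prop := ∀ B ∈ 𝓑, e ∈ B

/-- A handle: a nonempty subset of the ground set which every circuit
either avoids entirely or contains entirely. -/
def IsHandle (E : Finset α) (𝓑 : Finset (Finset α)) (H : Finset α) : Prop :=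
  H.Nonempty ∧ H ⊆ E ∧ ∀ C, IsCircuit E 𝓑 C → Disjoint H C ∨ H ⊆ C

/-- The rank of a matroid: the common cardinality of its bases. -/
def FinMatroid.rank (M : FinMatroid α) : ℕ := dataRank M.bases

/-- The bases of the deletion matroid `M \ H`: the maximal `M`-independent
subsets of `E ∖ H`. -/
noncomputable def deleteBases (M : FinMatroid α) (H : Finset α) : Finset (Finset α) :=
  ((M.E \ H).powerset.filter fun I => Indep M.bases I).filter
    fun I => ∀ J ∈ (M.E \ H).powerset, Indep M.bases J → I ⊆ J → I = J

/-- The bases of the contraction matroid `M / H` (for `H` independent):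
the sets `B \ H` where `B` is a basis of `M` containing `H`. -/
noncomputable def contractBases (M : FinMatroid α) (H : Finset α) : Finset (Finset α) :=
  (M.bases.filter fun B => H ⊆ B).image fun B => B \ H

/-- `𝓑N` is a quotient of `𝓑M` (on the common ground set `E`):
every circuit of `M` is a union of circuits of `N`. -/
def IsQuotientData (E : Finset α) (𝓑N 𝓑M : Finset (Finset α)) : Prop :=
  ∀ C, IsCircuit E 𝓑M C →
    ∃ 𝒞 : Finset (Finset α), (∀ D ∈ 𝒞, IsCircuit E 𝓑N D) ∧ C = 𝒞.sup id

/-- The bases of the truncation `τ(M)`: the independent sets of `M`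
of cardinality exactly `rank M - 1`. -/
noncomputable def truncBases (M : FinMatroid α) : Finset (Finset α) :=
  M.E.powerset.filter fun I => Indep M.bases I ∧ I.card = M.rank - 1

/-- The matroid basis polynomial `Ψ = ∑_{B basis} x^B`. -/
noncomputable def basisPoly (K : Type*) [CommRing K] (𝓑 : Finset (Finset α)) :
    MvPolynomial α K :=
  ∑ B ∈ 𝓑, ∏ e ∈ B, MvPolynomial.X e

/-- The multivariate Tutte polynomial
`Z = ∑_{A ⊆ E} p^(rank - rank A) x^A`, an element of `K[p][x_e : e ∈ E]`. -/
noncomputable def tutte (K : Type*) [CommRing K] (E : Finset α) (𝓑 : Finset (Finset α)) :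
    MvPolynomial α (Polynomial K) :=
  ∑ A ∈ E.powerset,
    MvPolynomial.C (Polynomial.X ^ (dataRank 𝓑 - dataRankOf 𝓑 A)) * ∏ a ∈ A, MvPolynomial.X a

/-- A polynomial with coefficient function `c` supported on the bases `𝓑`:
`∑_{B ∈ 𝓑} c_B x^B`. -/
noncomputable def msp (K : Type*) [CommRing K] (𝓑 : Finset (Finset α)) (c : Finset α → K) :
    MvPolynomial α K :=
  ∑ B ∈ 𝓑, MvPolynomial.C (c B) * ∏ e ∈ B, MvPolynomial.X e

theorem stmt3 {α : Type*} [DecidableEq α] (M N : FinMatroid α) (hE : N.E = M.E)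
    (hq : IsQuotientData M.E N.bases M.bases) :
    ∀ H, IsHandle M.E N.bases H → IsHandle M.E M.bases H := by
  rintro H ⟨hne, hsub, hc⟩
  refine ⟨hne, hsub, fun C hC => ?_⟩
  obtain ⟨𝒞, hD, rfl⟩ := hq C hC
  by_cases h : ∃ D ∈ 𝒞, H ⊆ D
  · obtain ⟨D, hDm, hHD⟩ := h
    exact Or.inr (hHD.trans (Finset.le_sup (f := id) hDm))
  · push_neg at h
    refine Or.inl (Finset.disjoint_sup_right.mpr fun D hDm => ?_)
    rcases hc D (hD D hDm) with hd | hs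
    · exact hd
    · exact absurd hs (h D hDm)
end

section
/- Let H be a proper handle of a matroid M on E such that H is independent in M and contains no coloops of M. Then rank(M \ H) = rank(M) − |H| + 1. -/
open Classical

variable {α : Type*} [DecidableEq α]

lemma indep_mono {𝓑 : Finset (Finset α)} {I J : Finset α} (h : Indep 𝓑 J) (hIJ : I ⊆ J) :
    Indep 𝓑 I := by
  obtain ⟨B, hB, hJB⟩ := h; exact ⟨B, hB, hIJ.trans hJB⟩

lemma card_eq_aux (M : FinMatroid α) :
    ∀ n (B B' : Finset α), B ∈ M.bases → B' ∈ M.bases → (B \ B').card = n →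
      B.card = B'.card := by
  intro n
  induction n using Nat.strong_induction_on with
  | _ n ih =>
    intro B B' hB hB' hn
    rcases Nat.eq_zero_or_pos n with h0 | hpos
    · subst h0
      rw [Finset.card_eq_zero] at hn
      have hBB' : B ⊆ B' := Finset.sdiff_eq_empty_iff_subset.mp hn
      have hB'B : B' ⊆ B := by
        rw [← Finset.sdiff_eq_empty_iff_subset]
        by_contra hne
        obtain ⟨e, he⟩ := Finset.nonempty_of_ne_empty hne
        obtain ⟨f, hf, -⟩ := M.exchange B' hB' B hB e he
        rw [hn] at hf
        exact absurd hf (Finset.notMem_empty f)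
      exact le_antisymm (Finset.card_le_card hBB') (Finset.card_le_card hB'B)
    · have hne : (B \ B').Nonempty := by rw [← Finset.card_pos, hn]; exact hpos
      obtain ⟨e, he⟩ := hne
      obtain ⟨f, hf, hB''⟩ := M.exchange B hB B' hB' e he
      have heB : e ∈ B := (Finset.mem_sdiff.mp he).1
      have hfB' : f ∈ B' := (Finset.mem_sdiff.mp hf).1
      have hfB : f ∉ B := (Finset.mem_sdiff.mp hf).2
      have hBpos : 0 < B.card := Finset.card_pos.mpr ⟨e, heB⟩
      have hcard : (insert f (B.erase e)).card = B.card := by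
        rw [Finset.card_insert_of_notMem (fun h => hfB (Finset.mem_of_mem_erase h)),
            Finset.card_erase_of_mem heB]
        omega
      have hsd : (insert f (B.erase e)) \ B' = (B \ B').erase e := by
        ext x
        simp only [Finset.mem_sdiff, Finset.mem_insert, Finset.mem_erase]
        constructor
        · rintro ⟨hx | ⟨hxe, hxB⟩, hxB'⟩
          · exact absurd (hx ▸ hfB') hxB'
          · exact ⟨hxe, hxB, hxB'⟩
        · rintro ⟨hxe, hxB, hxB'⟩
          exact ⟨Or.inr ⟨hxe, hxB⟩, hxB'⟩
      have hsdcard : ((insert f (B.erase e)) \ B').card = n - 1 := by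
        rw [hsd, Finset.card_erase_of_mem he, hn]
      have := ih (n - 1) (by omega) (insert f (B.erase e)) B' hB'' hB' hsdcard
      omega
    termination_by n => n

lemma rank_eq_card (M : FinMatroid α) {B : Finset α} (hB : B ∈ M.bases) :
    M.rank = B.card := by
  unfold FinMatroid.rank dataRank
  refine le_antisymm (Finset.sup_le fun B' hB' => le_of_eq ?_) (Finset.le_sup hB)
  exact card_eq_aux M _ B' B hB' hB rfl

lemma indep_card_le (M : FinMatroid α) {I : Finset α} (hI : Indep M.bases I) :
    I.card ≤ M.rank := by
  obtain ⟨B, hB, hIB⟩ := hI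
  rw [rank_eq_card M hB]
  exact Finset.card_le_card hIB

lemma exists_circuit (E : Finset α) (𝓑 : Finset (Finset α)) (h𝓑 : 𝓑.Nonempty) :
    ∀ n (S : Finset α), S.card ≤ n → S ⊆ E → ¬ Indep 𝓑 S →
      ∃ C, C ⊆ S ∧ IsCircuit E 𝓑 C := by
  intro n
  induction n with
  | zero =>
    intro S hcard hSE hS
    obtain ⟨B, hB⟩ := h𝓑
    rw [Nat.le_zero, Finset.card_eq_zero] at hcard
    exact absurd ⟨B, hB, hcard ▸ Finset.empty_subset B⟩ hS
  | succ n ih =>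
    intro S hcard hSE hS
    by_cases h : ∀ D ⊂ S, Indep 𝓑 D
    · exact ⟨S, subset_rfl, hSE, hS, h⟩
    · push_neg at h
      obtain ⟨D, hDS, hD⟩ := h
      have hDc : D.card ≤ n := by
        have := Finset.card_lt_card hDS; omega
      obtain ⟨C, hCD, hC⟩ := ih D hDc (hDS.subset.trans hSE) hD
      exact ⟨C, hCD.trans hDS.subset, hC⟩

lemma indep_del_card_le (M : FinMatroid α) (H : Finset α)
    (hH : IsHandle M.E M.bases H) (hHr : H.card ≤ M.rank)
    {I : Finset α} (hIE : I ⊆ M.E \ H) (hI : Indep M.bases I) :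
    I.card ≤ M.rank - H.card + 1 := by
  obtain ⟨hHne, hHE, hcirc⟩ := hH
  obtain ⟨h₀, hh₀⟩ := hHne
  have hdisj : Disjoint I H := by
    rw [Finset.disjoint_left]
    intro x hxI hxH
    exact (Finset.mem_sdiff.mp (hIE hxI)).2 hxH
  have hJE : I ∪ H.erase h₀ ⊆ M.E := by
    intro x hx
    rcases Finset.mem_union.mp hx with h | h
    · exact (Finset.mem_sdiff.mp (hIE h)).1
    · exact hHE (Finset.mem_of_mem_erase h)
  have hJindep : Indep M.bases (I ∪ H.erase h₀) := by
    by_contra hdep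
    obtain ⟨C, hCJ, hCcirc⟩ :=
      exists_circuit M.E M.bases M.bases_nonempty (I ∪ H.erase h₀).card _ le_rfl hJE hdep
    rcases hcirc C hCcirc with hd | hsub
    · have hCI : C ⊆ I := by
        intro x hx
        rcases Finset.mem_union.mp (hCJ hx) with h | h
        · exact h
        · exact absurd hx (Finset.disjoint_left.mp hd (Finset.mem_of_mem_erase h))
      exact hCcirc.2.1 (indep_mono hI hCI)
    · have hh₀C : h₀ ∈ I ∪ H.erase h₀ := hCJ (hsub hh₀)
      rcases Finset.mem_union.mp hh₀C with h | h
      · exact Finset.disjoint_left.mp hdisj h hh₀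
      · exact Finset.notMem_erase h₀ H h
  have hJcard : (I ∪ H.erase h₀).card = I.card + (H.card - 1) := by
    rw [Finset.card_union_of_disjoint
        (hdisj.mono_right (Finset.erase_subset h₀ H)),
      Finset.card_erase_of_mem hh₀]
  have hle := indep_card_le M hJindep
  have hH1 : 1 ≤ H.card := Finset.card_pos.mpr ⟨h₀, hh₀⟩
  omega

theorem stmt4 {α : Type*} [DecidableEq α] (M : FinMatroid α) (H : Finset α)
    (hH : IsHandle M.E M.bases H) (hprop : H ≠ M.E)
    (hind : Indep M.bases H) (hco : ∀ h ∈ H, ¬ IsColoop M.bases h) :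
    dataRank (deleteBases M H) = M.rank - H.card + 1 := by
  obtain ⟨B, hB, hHB⟩ := hind
  have hrank : M.rank = B.card := rank_eq_card M hB
  have hHr : H.card ≤ M.rank := hrank ▸ Finset.card_le_card hHB
  obtain ⟨hHne, hHE, _⟩ := hH
  obtain ⟨h₀, hh₀⟩ := hHne
  have hnc : ¬ IsColoop M.bases h₀ := hco h₀ hh₀
  rw [IsColoop] at hnc; push_neg at hnc
  obtain ⟨B', hB', hh₀B'⟩ := hnc
  have hh₀B : h₀ ∈ B := hHB hh₀
  obtain ⟨f, hf, hB''⟩ := M.exchange B hB B' hB' h₀ (Finset.mem_sdiff.mpr ⟨hh₀B, hh₀B'⟩)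
  have hfB' : f ∈ B' := (Finset.mem_sdiff.mp hf).1
  have hfB : f ∉ B := (Finset.mem_sdiff.mp hf).2
  have hfE : f ∈ M.E := M.subset_ground B' hB' hfB'
  have hfH : f ∉ H := fun h => hfB (hHB h)
  set S := insert f (B \ H) with hS
  have hSsub : S ⊆ M.E \ H := by
    intro x hx
    rcases Finset.mem_insert.mp hx with rfl | hx
    · exact Finset.mem_sdiff.mpr ⟨hfE, hfH⟩
    · obtain ⟨hxB, hxH⟩ := Finset.mem_sdiff.mp hx
      exact Finset.mem_sdiff.mpr ⟨M.subset_ground B hB hxB, hxH⟩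
  have hSindep : Indep M.bases S := by
    refine ⟨insert f (B.erase h₀), hB'', ?_⟩
    intro x hx
    rcases Finset.mem_insert.mp hx with rfl | hx
    · exact Finset.mem_insert_self _ _
    · obtain ⟨hxB, hxH⟩ := Finset.mem_sdiff.mp hx
      exact Finset.mem_insert_of_mem (Finset.mem_erase.mpr ⟨fun he => hxH (he ▸ hh₀), hxB⟩)
  have hScard : S.card = M.rank - H.card + 1 := by
    have hnm : f ∉ B \ H := fun h => hfB (Finset.mem_sdiff.mp h).1
    rw [hS, Finset.card_insert_of_notMem hnm, Finset.card_sdiff_of_subset hHB, hrank]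
  set T := (M.E \ H).powerset.filter (fun I => Indep M.bases I) with hT
  have hST : S ∈ T := Finset.mem_filter.mpr ⟨Finset.mem_powerset.mpr hSsub, hSindep⟩
  obtain ⟨I, hIT, hImax⟩ := Finset.exists_max_image T Finset.card ⟨S, hST⟩
  have hIdel : I ∈ deleteBases M H := by
    rw [deleteBases]
    refine Finset.mem_filter.mpr ⟨hIT, ?_⟩
    intro J hJ hJind hIJ
    exact Finset.eq_of_subset_of_card_le hIJ (hImax J (Finset.mem_filter.mpr ⟨hJ, hJind⟩))
  refine le_antisymm (Finset.sup_le fun I' hI' => ?_) ?_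
  · rw [deleteBases] at hI'
    have h1 := Finset.mem_filter.mp (Finset.mem_filter.mp hI').1
    exact indep_del_card_le M H ⟨⟨h₀, hh₀⟩, hHE, ‹_›⟩ hHr (Finset.mem_powerset.mp h1.1) h1.2
  · calc M.rank - H.card + 1 = S.card := hScard.symm
      _ ≤ I.card := hImax S hST
      _ ≤ _ := Finset.le_sup hIdel
end

section
/- Let H be a proper handle of a matroid M on E with H independent and containing no coloops of M. For any h ∈ H, every element of H ∖ {h} is a coloop of the deletion matroid M \ h. -/
open Classical

variable {α : Type*} [DecidableEq α]

lemma exists_circuit_of_dep {E : Finset α} {𝓑 : Finset (Finset α)} :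
    ∀ S : Finset α, S ⊆ E → ¬ Indep 𝓑 S → ∃ C ⊆ S, IsCircuit E 𝓑 C := by
  intro S
  induction S using Finset.strongInduction with
  | _ S ih =>
    intro hSE hdep
    by_cases hmin : ∀ D ⊂ S, Indep 𝓑 D
    · exact ⟨S, le_refl _, hSE, hdep, hmin⟩
    · push_neg at hmin
      obtain ⟨D, hDS, hD⟩ := hmin
      obtain ⟨C, hCD, hC⟩ := ih D hDS (hDS.subset.trans hSE) hD
      exact ⟨C, hCD.trans hDS.subset, hC⟩

theorem stmt5 {α : Type*} [DecidableEq α] (M : FinMatroid α) (H : Finset α)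
    (hH : IsHandle M.E M.bases H) (hprop : H ≠ M.E)
    (hind : Indep M.bases H) (hco : ∀ h ∈ H, ¬ IsColoop M.bases h)
    (h : α) (hh : h ∈ H) :
    ∀ x ∈ H.erase h, IsColoop (deleteBases M {h}) x := by
  intro x hx B hB
  have hxh : x ≠ h := (Finset.mem_erase.mp hx).1
  have hxH : x ∈ H := (Finset.mem_erase.mp hx).2
  have hxE : x ∈ M.E := hH.2.1 hxH
  simp only [deleteBases, Finset.mem_filter, Finset.mem_powerset] at hB
  obtain ⟨⟨hBE, hBind⟩, hBmax⟩ := hB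
  by_contra hxB
  have hsub : insert x B ⊆ M.E \ {h} := by
    intro y hy
    rcases Finset.mem_insert.mp hy with rfl | hy
    · exact Finset.mem_sdiff.mpr ⟨hxE, by simp [hxh]⟩
    · exact hBE hy
  have hdep : ¬ Indep M.bases (insert x B) := by
    intro hind'
    have := hBmax (insert x B) hsub hind'
      (Finset.subset_insert _ _)
    exact hxB (this ▸ Finset.mem_insert_self x B)
  obtain ⟨C, hCsub, hC⟩ := exists_circuit_of_dep (insert x B)
    (hsub.trans (Finset.sdiff_subset)) hdep
  have hxC : x ∈ C := by
    by_contra hxC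
    have hCB : C ⊆ B := fun y hy => by
      rcases Finset.mem_insert.mp (hCsub hy) with rfl | h'
      · exact absurd hy hxC
      · exact h'
    obtain ⟨B0, hB0, hBB0⟩ := hBind
    exact hC.2.1 ⟨B0, hB0, hCB.trans hBB0⟩
  have hHC : H ⊆ C := by
    rcases hH.2.2 C hC with hd | hs
    · exact absurd hd (Finset.not_disjoint_iff.mpr ⟨x, hxH, hxC⟩)
    · exact hs
  have : h ∈ insert x B := hCsub (hHC hh)
  have := hsub this
  simp at this
end

section
/- If M is a loopless matroid on E with rank(M) ≥ 2, then its truncation τ(M) is a connected matroid: any two distinct elements of E lie in a common circuit of τ(M). -/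
open Classical

variable {α : Type*} [DecidableEq α]

lemma bases_card_eq_aux (M : FinMatroid α) :
    ∀ n B, B ∈ M.bases → ∀ B' ∈ M.bases, (B \ B').card = n → B.card = B'.card := by
  intro n
  induction n with
  | zero =>
    intro B hB B' hB' hcard
    have hsub : B ⊆ B' := by
      rw [Finset.card_eq_zero, Finset.sdiff_eq_empty_iff_subset] at hcard
      exact hcard
    have hsub' : B' ⊆ B := by
      by_contra hc
      obtain ⟨e, he⟩ : (B' \ B).Nonempty := by
        rw [Finset.sdiff_nonempty]; exact hc
      obtain ⟨f, hf, -⟩ := M.exchange B' hB' B hB e he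
      rw [Finset.sdiff_eq_empty_iff_subset.mpr hsub] at hf
      exact absurd hf (Finset.notMem_empty f)
    rw [Finset.Subset.antisymm hsub hsub']
  | succ n ih =>
    intro B hB B' hB' hcard
    obtain ⟨e, he⟩ : (B \ B').Nonempty := by
      rw [← Finset.card_pos, hcard]; omega
    obtain ⟨f, hf, hB''⟩ := M.exchange B hB B' hB' e he
    have heB : e ∈ B := (Finset.mem_sdiff.mp he).1
    have hfB' : f ∈ B' := (Finset.mem_sdiff.mp hf).1
    have hfB : f ∉ B := (Finset.mem_sdiff.mp hf).2
    have hcard2 : (insert f (B.erase e)).card = B.card := by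
      rw [Finset.card_insert_of_notMem (fun h => hfB (Finset.mem_of_mem_erase h)),
        Finset.card_erase_of_mem heB]
      have : 1 ≤ B.card := Finset.card_pos.mpr ⟨e, heB⟩
      omega
    have hdiff : (insert f (B.erase e)) \ B' = (B \ B').erase e := by
      ext x
      simp only [Finset.mem_sdiff, Finset.mem_insert, Finset.mem_erase]
      constructor
      · rintro ⟨h1 | ⟨h1, h2⟩, h3⟩
        · exact absurd (h1 ▸ hfB') h3
        · exact ⟨h1, h2, h3⟩
      · rintro ⟨h1, h2, h3⟩
        exact ⟨Or.inr ⟨h1, h2⟩, h3⟩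
    have hdcard : ((insert f (B.erase e)) \ B').card = n := by
      rw [hdiff, Finset.card_erase_of_mem he, hcard]; omega
    have := ih (insert f (B.erase e)) hB'' B' hB' hdcard
    omega

lemma card_of_basis (M : FinMatroid α) {B : Finset α} (hB : B ∈ M.bases) :
    B.card = M.rank := by
  unfold FinMatroid.rank dataRank
  apply le_antisymm
  · exact Finset.le_sup hB
  · exact Finset.sup_le fun B' hB' =>
      le_of_eq (bases_card_eq_aux M _ B' hB' B hB rfl)

lemma indep_trunc_of_subset (M : FinMatroid α) {B D : Finset α} (hB : B ∈ M.bases)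
    (hDB : D ⊆ B) (hD : D.card ≤ M.rank - 1) : Indep (truncBases M) D := by
  have hBr : B.card = M.rank := card_of_basis M hB
  obtain ⟨D', hDD', hD'B, hD'c⟩ :=
    Finset.exists_subsuperset_card_eq (n := M.rank - 1 - D.card + D.card) hDB
      (by omega) (by omega : M.rank - 1 - D.card + D.card ≤ B.card)
  refine ⟨D', ?_, hDD'⟩
  rw [truncBases, Finset.mem_filter, Finset.mem_powerset]
  refine ⟨hD'B.trans (M.subset_ground B hB), ⟨B, hB, hD'B⟩, by omega⟩

theorem stmt8 {α : Type*} [DecidableEq α] (M : FinMatroid α)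
    (hl : ∀ e ∈ M.E, ¬ IsLoop M.bases e) (hr : 2 ≤ M.rank) :
    ∀ e ∈ M.E, ∀ f ∈ M.E, e ≠ f →
      ∃ C, IsCircuit M.E (truncBases M) C ∧ e ∈ C ∧ f ∈ C := by
  intro e he f hf hef
  have hcard_trunc : ∀ T ∈ truncBases M, T.card = M.rank - 1 := by
    intro T hT
    rw [truncBases, Finset.mem_filter] at hT
    exact hT.2.2
  have hindep_trunc : ∀ T ∈ truncBases M, Indep M.bases T := by
    intro T hT
    rw [truncBases, Finset.mem_filter] at hT
    exact hT.2.1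
  by_cases h : ∃ B ∈ M.bases, e ∈ B ∧ f ∈ B
  · obtain ⟨B, hB, heB, hfB⟩ := h
    refine ⟨B, ⟨M.subset_ground B hB, ?_, ?_⟩, heB, hfB⟩
    · rintro ⟨T, hT, hBT⟩
      have := Finset.card_le_card hBT
      rw [card_of_basis M hB, hcard_trunc T hT] at this
      omega
    · intro D hD
      have hDB : D ⊆ B := hD.subset
      have : D.card < B.card := Finset.card_lt_card hD
      rw [card_of_basis M hB] at this
      exact indep_trunc_of_subset M hB hDB (by omega)
  · refine ⟨{e, f}, ⟨?_, ?_, ?_⟩, Finset.mem_insert_self e _,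
      Finset.mem_insert_of_mem (Finset.mem_singleton_self f)⟩
    · intro x hx
      rcases Finset.mem_insert.mp hx with h1 | h1
      · exact h1 ▸ he
      · exact (Finset.mem_singleton.mp h1) ▸ hf
    · rintro ⟨T, hT, hsub⟩
      obtain ⟨B, hB, hTB⟩ := hindep_trunc T hT
      exact h ⟨B, hB, hTB (hsub (Finset.mem_insert_self e _)),
        hTB (hsub (Finset.mem_insert_of_mem (Finset.mem_singleton_self f)))⟩
    · intro D hD
      have hsub : D ⊆ ({e, f} : Finset α) := hD.subset
      have hne : ¬ (e ∈ D ∧ f ∈ D) := by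
        rintro ⟨h1, h2⟩
        exact hD.ne (Finset.Subset.antisymm hsub (Finset.insert_subset h1
          (Finset.singleton_subset_iff.mpr h2)))
      have hone : D ⊆ {e} ∨ D ⊆ {f} := by
        by_cases h1 : f ∈ D
        · have h2 : e ∉ D := fun h2 => hne ⟨h2, h1⟩
          right; intro x hx
          rcases Finset.mem_insert.mp (hsub hx) with rfl | h3
          · exact absurd hx h2
          · exact h3
        · left; intro x hx
          rcases Finset.mem_insert.mp (hsub hx) with rfl | h3
          · exact Finset.mem_singleton_self x
          · rw [Finset.mem_singleton.mp h3] at hx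
            exact absurd hx h1
      have hget : ∀ g ∈ M.E, ¬ IsLoop M.bases g → ∃ B ∈ M.bases, g ∈ B := by
        intro g _ hg
        by_contra hc
        push_neg at hc
        exact hg hc
      rcases hone with hD1 | hD1
      · obtain ⟨B, hB, hgB⟩ := hget e he (hl e he)
        refine indep_trunc_of_subset M hB
          (hD1.trans (Finset.singleton_subset_iff.mpr hgB)) ?_
        have := Finset.card_le_card hD1
        rw [Finset.card_singleton] at this
        omega
      · obtain ⟨B, hB, hgB⟩ := hget f hf (hl f hf)
        refine indep_trunc_of_subset M hB
          (hD1.trans (Finset.singleton_subset_iff.mpr hgB)) ?_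
        have := Finset.card_le_card hD1
        rw [Finset.card_singleton] at this
        omega
end

section
/- Let M be a matroid on E over a field F of characteristic p > 0, let Ψ_M = Σ_{B ∈ 𝓑(M)} x^B be its matroid basis polynomial, and let e ∈ E be an element that is not a coloop. Then x_e · Ψ_M^{p−1} does not belong to the Frobenius power m^{[p]} = ({x_f^p : f ∈ E}) of the maximal ideal m = ({x_f : f ∈ E}): concretely, for any basis B of M avoiding e, the monomial x_e · x^{(p−1)·B} occurs in x_e Ψ_M^{p−1} with coefficient 1, and this monomial lies outside m^{[p]}. -/
open Classical

variable {α : Type*} [DecidableEq α]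

section Helpers
open MvPolynomial
variable {α : Type*} [DecidableEq α] {F : Type*} [Field F]

noncomputable def indb (B : Finset α) : α →₀ ℕ := ∑ f ∈ B, Finsupp.single f 1

lemma indb_apply (B : Finset α) (g : α) : indb B g = if g ∈ B then 1 else 0 := by
  classical
  simp [indb, Finset.sum_apply', Finsupp.single_apply]

lemma indb_inj {B B' : Finset α} (h : indb B = indb B') : B = B' := by
  ext g
  have := congrArg (fun d : α →₀ ℕ => d g) h
  simp only [indb_apply] at this
  by_cases hg : g ∈ B <;> by_cases hg' : g ∈ B' <;> simp_all

lemma prod_X_eq (B : Finset α) :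
    (∏ f ∈ B, (X f : MvPolynomial α F)) = monomial (indb B) 1 := by
  rw [indb, monomial_sum_one]
  simp [X]

lemma coeff_basisPoly' (𝓑 : Finset (Finset α)) (u : α →₀ ℕ) :
    coeff u (∑ B ∈ 𝓑, ∏ f ∈ B, (X f : MvPolynomial α F))
      = ∑ B ∈ 𝓑, if indb B = u then (1 : F) else 0 := by
  rw [coeff_sum]
  refine Finset.sum_congr rfl fun B _ => by rw [prod_X_eq, coeff_monomial]

lemma exists_basis_of_coeff_ne_zero {𝓑 : Finset (Finset α)} {u : α →₀ ℕ}
    (h : coeff u (∑ B ∈ 𝓑, ∏ f ∈ B, (X f : MvPolynomial α F)) ≠ 0) :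
    ∃ B ∈ 𝓑, indb B = u := by
  rw [coeff_basisPoly'] at h
  by_contra hc
  push_neg at hc
  exact h (Finset.sum_eq_zero fun B hB => if_neg (hc B hB))

lemma pow_support_bound (𝓑 : Finset (Finset α)) :
    ∀ n (d : α →₀ ℕ),
      coeff d ((∑ B ∈ 𝓑, ∏ f ∈ B, (X f : MvPolynomial α F)) ^ n) ≠ 0 → ∀ f, d f ≤ n := by
  intro n
  induction n with
  | zero =>
    intro d h f
    rw [pow_zero, coeff_one] at h
    have : (0 : α →₀ ℕ) = d := by by_contra hh; exact h (if_neg hh)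
    simp [← this]
  | succ n ih =>
    intro d h f
    rw [pow_succ, coeff_mul] at h
    obtain ⟨q, hq, hne⟩ := Finset.exists_ne_zero_of_sum_ne_zero h
    rw [Finset.HasAntidiagonal.mem_antidiagonal] at hq
    have h1 : coeff q.1 ((∑ B ∈ 𝓑, ∏ f ∈ B, (X f : MvPolynomial α F)) ^ n) ≠ 0 :=
      fun hz => hne (by rw [hz, zero_mul])
    have h2 : coeff q.2 (∑ B ∈ 𝓑, ∏ f ∈ B, (X f : MvPolynomial α F)) ≠ 0 :=
      fun hz => hne (by rw [hz, mul_zero])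
    obtain ⟨B, _, hB⟩ := exists_basis_of_coeff_ne_zero h2
    have hb1 : q.2 f ≤ 1 := by rw [← hB, indb_apply]; split <;> omega
    have := ih q.1 h1 f
    have := congrArg (fun v : α →₀ ℕ => v f) hq
    simp only [Finsupp.add_apply] at this
    omega

lemma coeff_pow_eq_one (𝓑 : Finset (Finset α)) (B : Finset α) (hB : B ∈ 𝓑) :
    ∀ n, coeff (n • indb B) ((∑ B ∈ 𝓑, ∏ f ∈ B, (X f : MvPolynomial α F)) ^ n) = 1 := by
  intro n
  induction n with
  | zero => simp
  | succ n ih =>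
    rw [pow_succ, coeff_mul]
    have hpair : ((n • indb B, indb B) : (α →₀ ℕ) × (α →₀ ℕ)) ∈
        Finset.HasAntidiagonal.antidiagonal ((n + 1) • indb B) := by
      rw [Finset.HasAntidiagonal.mem_antidiagonal, succ_nsmul]
    rw [Finset.sum_eq_single_of_mem _ hpair]
    · rw [ih, coeff_basisPoly', one_mul]
      rw [Finset.sum_eq_single_of_mem B hB]
      · rw [if_pos rfl]
      · intro B' _ hne
        exact if_neg fun hc => hne (indb_inj hc)
    · intro q hq hne
      rw [Finset.HasAntidiagonal.mem_antidiagonal] at hq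
      by_contra hc
      have h1 : coeff q.1 ((∑ B ∈ 𝓑, ∏ f ∈ B, (X f : MvPolynomial α F)) ^ n) ≠ 0 :=
        fun hz => hc (by rw [hz, zero_mul])
      have h2 : coeff q.2 (∑ B ∈ 𝓑, ∏ f ∈ B, (X f : MvPolynomial α F)) ≠ 0 :=
        fun hz => hc (by rw [hz, mul_zero])
      obtain ⟨B', hB', hB'2⟩ := exists_basis_of_coeff_ne_zero h2
      have hbd := pow_support_bound 𝓑 n q.1 h1
      have hB'B : B' = B := by
        ext g
        have hg := congrArg (fun v : α →₀ ℕ => v g) hq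
        simp only [Finsupp.add_apply, Finsupp.smul_apply, smul_eq_mul] at hg
        rw [← hB'2, indb_apply] at hg
        rw [indb_apply] at hg
        have := hbd g
        constructor <;> intro hmem <;> by_contra hnm <;> simp [hmem, hnm] at hg <;> omega
      have h3 : q.2 = indb B := by rw [← hB'2, hB'B]
      have hq1 : q.1 = n • indb B := by
        have h4 : q.1 + indb B = n • indb B + indb B := by
          rw [← succ_nsmul, ← hq, h3]
        exact add_right_cancel h4
      exact hne (Prod.ext hq1 h3)

lemma coeff_eq_zero_of_mem_frob (p : ℕ) (E : Finset α) {q : MvPolynomial α F}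
    (hq : q ∈ Ideal.span ((fun f => (X f : MvPolynomial α F) ^ p) '' ↑E)) :
    ∀ (d : α →₀ ℕ), (∀ f, d f < p) → coeff d q = 0 := by
  induction hq using Submodule.span_induction with
  | mem x hx =>
    intro d hd
    obtain ⟨f, -, rfl⟩ := hx
    show coeff d (X f ^ p) = 0
    rw [X_pow_eq_monomial, coeff_monomial, if_neg]
    intro hc
    have hv := congrArg (fun v : α →₀ ℕ => v f) hc
    simp [Finsupp.single_apply] at hv
    have h2 := hd f
    omega
  | zero => intro d hd; exact coeff_zero d
  | add x y _ _ hx hy => intro d hd; rw [coeff_add, hx d hd, hy d hd, add_zero]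
  | smul a x _ hx =>
    intro d hd
    rw [smul_eq_mul, coeff_mul]
    refine Finset.sum_eq_zero fun q' hq' => ?_
    rw [Finset.HasAntidiagonal.mem_antidiagonal] at hq'
    rw [hx q'.2 (fun f => by
      have := congrArg (fun v : α →₀ ℕ => v f) hq'
      simp only [Finsupp.add_apply] at this
      have := hd f
      omega), mul_zero]

end Helpers

theorem stmt19 {α : Type*} [DecidableEq α] {F : Type*} [Field F]
    (p : ℕ) (hp : p.Prime) [CharP F p]
    (M : FinMatroid α) (e : α) (he : e ∈ M.E) (hne : ¬ IsColoop M.bases e) :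
    (∀ B ∈ M.bases, e ∉ B →
      MvPolynomial.coeff (Finsupp.single e 1 + (p - 1) • ∑ f ∈ B, Finsupp.single f 1)
          (MvPolynomial.X e * (basisPoly F M.bases) ^ (p - 1)) = 1 ∧
      MvPolynomial.monomial (Finsupp.single e 1 + (p - 1) • ∑ f ∈ B, Finsupp.single f 1)
          (1 : F) ∉
        Ideal.span ((fun f => (MvPolynomial.X f : MvPolynomial α F) ^ p) '' ↑M.E)) ∧
    MvPolynomial.X e * (basisPoly F M.bases) ^ (p - 1) ∉
      Ideal.span ((fun f => (MvPolynomial.X f : MvPolynomial α F) ^ p) '' ↑M.E) := by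
  
  have hd : ∀ B : Finset α, e ∉ B → ∀ f,
      (Finsupp.single e 1 + (p - 1) • ∑ f ∈ B, Finsupp.single f 1 : α →₀ ℕ) f < p := by
    intro B heB f
    have h2 := hp.two_le
    have hr : (∑ g ∈ B, Finsupp.single g 1 : α →₀ ℕ) = indb B := rfl
    rw [hr]
    simp only [Finsupp.add_apply, Finsupp.smul_apply, Finsupp.single_apply, indb_apply,
      smul_eq_mul]
    by_cases hf : e = f
    · subst hf; rw [if_pos rfl, if_neg heB]; omega
    · rw [if_neg hf]; split <;> omega
  have key : ∀ B ∈ M.bases, e ∉ B →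
      MvPolynomial.coeff (Finsupp.single e 1 + (p - 1) • ∑ f ∈ B, Finsupp.single f 1)
        (MvPolynomial.X e * (basisPoly F M.bases) ^ (p - 1)) = 1 := by
    intro B hB heB
    have hr : ((p - 1) • ∑ f ∈ B, Finsupp.single f 1 : α →₀ ℕ) = (p - 1) • indb B := rfl
    rw [hr, MvPolynomial.coeff_X_mul]
    exact coeff_pow_eq_one M.bases B hB (p - 1)
  refine ⟨fun B hB heB => ⟨key B hB heB, ?_⟩, ?_⟩
  · intro hmem
    have hz := coeff_eq_zero_of_mem_frob p M.E hmem _ (hd B heB)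
    rw [MvPolynomial.coeff_monomial, if_pos rfl] at hz
    exact one_ne_zero hz
  · obtain ⟨B, hB, heB⟩ : ∃ B ∈ M.bases, e ∉ B := by
      unfold IsColoop at hne; push_neg at hne; exact hne
    intro hmem
    have hz := coeff_eq_zero_of_mem_frob p M.E hmem _ (hd B heB)
    rw [key B hB heB] at hz
    exact one_ne_zero hz
end
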